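/- Let x ∈ C^N, let π be a fixed permutation of [n]^d, and let G ∈ R^{[n]^d}. For uniformly random a ∈ [n]^d, define u_{π(i)} = Σ_{j∈[n]^d} G_{π(j)−π(i)} x_j ω^{a^T Σ j} (for a fixed invertible Σ). Then E_a[ |u_{π(i)} ω^{−a^T Σ i} − x_i G_0|² ] = Σ_{j ≠ i} |x_j G_{π(j)−π(i)}|², where ω = e^{2πi/n}. -/

import Mathlib

open Complex Finset

section Aux

variable {n : ℕ} [NeZero n] {ch : ZMod n → ℂ}

lemma aux_ch_nat (hch : ∀ t : ZMod n, ch t = Complex.exp (2 * Real.pi * Complex.I * (t.val : ℂ) / (n : ℂ)))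
    (m : ℕ) : ch ((m : ZMod n)) = Complex.exp (2 * Real.pi * Complex.I * (m : ℂ) / (n : ℂ)) := by
  rw [hch, ZMod.val_natCast]
  have h0 : (n : ℂ) ≠ 0 := Nat.cast_ne_zero.mpr (NeZero.ne n)
  have hm : (m : ℂ) = ((m % n : ℕ) : ℂ) + ((m / n : ℕ) : ℂ) * (n : ℂ) := by
    exact_mod_cast congrArg (Nat.cast : ℕ → ℂ) (Nat.mod_add_div' m n).symm
  have key : 2 * (Real.pi : ℂ) * Complex.I * (m : ℂ) / n
      = 2 * (Real.pi : ℂ) * Complex.I * ((m % n : ℕ) : ℂ) / n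
        + ((m / n : ℕ) : ℂ) * (2 * Real.pi * Complex.I) := by
    rw [hm]; field_simp
  rw [key, Complex.exp_add]
  have h1 : Complex.exp (((m / n : ℕ) : ℂ) * (2 * Real.pi * Complex.I)) = 1 := by
    have := Complex.exp_int_mul_two_pi_mul_I ((m / n : ℕ) : ℤ)
    simpa using this
  rw [h1, mul_one]

lemma aux_ch_zero (hch : ∀ t : ZMod n, ch t = Complex.exp (2 * Real.pi * Complex.I * (t.val : ℂ) / (n : ℂ))) :
    ch 0 = 1 := by
  rw [hch]; simp [ZMod.val_zero]

lemma aux_ch_add (hch : ∀ t : ZMod n, ch t = Complex.exp (2 * Real.pi * Complex.I * (t.val : ℂ) / (n : ℂ)))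
    (a b : ZMod n) : ch (a + b) = ch a * ch b := by
  have h0 : (n : ℂ) ≠ 0 := Nat.cast_ne_zero.mpr (NeZero.ne n)
  have hab : ((a.val + b.val : ℕ) : ZMod n) = a + b := by
    push_cast [ZMod.natCast_val, ZMod.cast_id]; ring
  rw [← hab, aux_ch_nat hch, hch a, hch b, ← Complex.exp_add]
  congr 1
  push_cast
  field_simp

lemma aux_ch_ne_zero (hch : ∀ t : ZMod n, ch t = Complex.exp (2 * Real.pi * Complex.I * (t.val : ℂ) / (n : ℂ)))
    (t : ZMod n) : ch t ≠ 0 := by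
  rw [hch]; exact Complex.exp_ne_zero _

lemma aux_ch_conj (hch : ∀ t : ZMod n, ch t = Complex.exp (2 * Real.pi * Complex.I * (t.val : ℂ) / (n : ℂ)))
    (t : ZMod n) : (starRingEnd ℂ) (ch t) = ch (-t) := by
  have h1 : ch (-t) * ch t = 1 := by
    rw [← aux_ch_add hch, neg_add_cancel, aux_ch_zero hch]
  have h2 : (starRingEnd ℂ) (ch t) * ch t = 1 := by
    rw [hch, ← Complex.exp_conj, ← Complex.exp_add]
    have : (starRingEnd ℂ) (2 * (Real.pi : ℂ) * Complex.I * (t.val : ℂ) / n)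
        = -(2 * (Real.pi : ℂ) * Complex.I * (t.val : ℂ) / n) := by
      simp only [map_div₀, map_mul, Complex.conj_I, Complex.conj_ofReal, map_ofNat,
        Complex.conj_natCast]
      ring
    rw [this, neg_add_cancel, Complex.exp_zero]
  exact mul_right_cancel₀ (aux_ch_ne_zero hch t) (h2.trans h1.symm)

lemma aux_ch_ne_one (hch : ∀ t : ZMod n, ch t = Complex.exp (2 * Real.pi * Complex.I * (t.val : ℂ) / (n : ℂ)))
    {v : ZMod n} (hv : v ≠ 0) : ch v ≠ 1 := by
  intro h1
  rw [hch, Complex.exp_eq_one_iff] at h1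
  obtain ⟨k, hk⟩ := h1
  have h0 : (n : ℂ) ≠ 0 := Nat.cast_ne_zero.mpr (NeZero.ne n)
  have hpi : (2 * (Real.pi : ℂ) * Complex.I) ≠ 0 := by
    simp [Real.pi_ne_zero, Complex.I_ne_zero]
  have hval : (v.val : ℂ) = (k : ℂ) * (n : ℂ) := by
    rw [div_eq_iff h0] at hk
    have h2 : (2 * (Real.pi : ℂ) * Complex.I) * (v.val : ℂ)
        = (2 * (Real.pi : ℂ) * Complex.I) * ((k : ℂ) * (n : ℂ)) := by
      linear_combination hk
    exact mul_left_cancel₀ hpi h2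
  have hvalz : (v.val : ℤ) = k * n := by exact_mod_cast hval
  have hlt : (v.val : ℤ) < n := by exact_mod_cast ZMod.val_lt v
  have hge : (0 : ℤ) ≤ (v.val : ℤ) := by positivity
  have hn1 : (1 : ℤ) ≤ n := by exact_mod_cast Nat.one_le_iff_ne_zero.mpr (NeZero.ne n)
  have hk0 : k = 0 := by nlinarith [hvalz, hlt, hge]
  rw [hk0, zero_mul] at hvalz
  have : v.val = 0 := by exact_mod_cast hvalz
  exact hv ((ZMod.val_eq_zero v).mp this)

lemma aux_sum_ch (hch : ∀ t : ZMod n, ch t = Complex.exp (2 * Real.pi * Complex.I * (t.val : ℂ) / (n : ℂ)))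
    (v : ZMod n) : ∑ t : ZMod n, ch (t * v) = if v = 0 then (n : ℂ) else 0 := by
  by_cases hv : v = 0
  · simp [hv, aux_ch_zero hch, ZMod.card]
  · rw [if_neg hv]
    have hshift : ∑ t : ZMod n, ch ((t + 1) * v) = ∑ t : ZMod n, ch (t * v) :=
      Fintype.sum_equiv (Equiv.addRight 1) _ _ (fun t => rfl)
    have hexp : ∑ t : ZMod n, ch ((t + 1) * v) = ch v * ∑ t : ZMod n, ch (t * v) := by
      rw [Finset.mul_sum]
      refine Finset.sum_congr rfl fun t _ => ?_
      rw [add_mul, one_mul, aux_ch_add hch, mul_comm]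
    have hmul : (ch v - 1) * ∑ t : ZMod n, ch (t * v) = 0 := by
      rw [sub_mul, one_mul, ← hexp, hshift, sub_self]
    rcases mul_eq_zero.mp hmul with h | h
    · exact absurd (sub_eq_zero.mp h) (aux_ch_ne_one hch hv)
    · exact h

lemma aux_ch_sum (hch : ∀ t : ZMod n, ch t = Complex.exp (2 * Real.pi * Complex.I * (t.val : ℂ) / (n : ℂ)))
    {ι : Type*} (t : Finset ι) (f : ι → ZMod n) :
    ch (∑ s ∈ t, f s) = ∏ s ∈ t, ch (f s) := by
  classical
  induction t using Finset.induction_on with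
  | empty => simpa using aux_ch_zero hch
  | insert _ _ hs ih => rw [Finset.sum_insert hs, Finset.prod_insert hs, aux_ch_add hch, ih]

lemma aux_sum_ch_pi (hch : ∀ t : ZMod n, ch t = Complex.exp (2 * Real.pi * Complex.I * (t.val : ℂ) / (n : ℂ)))
    (d : ℕ) (v : Fin d → ZMod n) :
    ∑ a : Fin d → ZMod n, ch (∑ s, a s * v s) = if v = 0 then (n : ℂ) ^ d else 0 := by
  classical
  calc ∑ a : Fin d → ZMod n, ch (∑ s, a s * v s)
      = ∑ a : Fin d → ZMod n, ∏ s, ch (a s * v s) := by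
        refine Finset.sum_congr rfl fun a _ => aux_ch_sum hch _ _
    _ = ∏ s, ∑ t : ZMod n, ch (t * v s) := (Fintype.prod_sum fun s t => ch (t * v s)).symm
    _ = ∏ s : Fin d, (if v s = 0 then (n : ℂ) else 0) := by
        refine Finset.prod_congr rfl fun s _ => aux_sum_ch hch (v s)
    _ = if v = 0 then (n : ℂ) ^ d else 0 := by
        by_cases hv : v = 0
        · simp [hv, Finset.prod_const, Finset.card_univ]
        · obtain ⟨s, hs⟩ := Function.ne_iff.mp hv
          rw [if_neg hv]
          exact Finset.prod_eq_zero (Finset.mem_univ s) (if_neg hs)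

end Aux

theorem stmt_11 (n d : ℕ) [NeZero n] (hn : ∃ k, n = 2 ^ k)
    (x : (Fin d → ZMod n) → ℂ) (G : (Fin d → ZMod n) → ℝ)
    (π : Equiv.Perm (Fin d → ZMod n))
    (A : Matrix (Fin d) (Fin d) (ZMod n)) (hA : Odd A.det.val)
    (i : Fin d → ZMod n)
    (ch : ZMod n → ℂ)
    (hch : ∀ t : ZMod n, ch t = Complex.exp (2 * Real.pi * Complex.I * (t.val : ℂ) / (n : ℂ))) :
    ((n : ℝ) ^ d)⁻¹ * ∑ a : Fin d → ZMod n,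
        ‖(∑ j : Fin d → ZMod n,
            (G (π j - π i) : ℂ) * x j * ch (∑ s, a s * (A.mulVec j) s)) *
          ch (-(∑ s, a s * (A.mulVec i) s)) - x i * (G 0 : ℂ)‖ ^ 2
      = ∑ j ∈ Finset.univ \ {i}, ‖x j‖ ^ 2 * (G (π j - π i)) ^ 2 := by
  classical
  obtain ⟨k, hk⟩ := hn
  -- A is invertible, so mulVec is injective
  have hdet : IsUnit A.det := by
    have h1 : IsUnit ((A.det.val : ℕ) : ZMod n) := by
      rw [ZMod.isUnit_iff_coprime]
      subst hk
      exact Nat.Coprime.pow_right _ hA.coprime_two_right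
    simpa [ZMod.natCast_val, ZMod.cast_id] using h1
  have : Invertible A := A.invertibleOfIsUnitDet hdet
  have hinj : Function.Injective (A.mulVec) := by
    intro v w h
    have h2 := congrArg (fun u => (⅟A).mulVec u) h
    simpa [Matrix.mulVec_mulVec, invOf_mul_self, Matrix.one_mulVec] using h2
  set c : (Fin d → ZMod n) → ℂ := fun j => (G (π j - π i) : ℂ) * x j with hc
  set S : Finset (Fin d → ZMod n) := Finset.univ \ {i} with hS
  -- rewrite expression inside norm
  have key : ∀ a : Fin d → ZMod n,
      (∑ j : Fin d → ZMod n,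
            (G (π j - π i) : ℂ) * x j * ch (∑ s, a s * (A.mulVec j) s)) *
          ch (-(∑ s, a s * (A.mulVec i) s)) - x i * (G 0 : ℂ)
      = ∑ j ∈ S, c j * ch (∑ s, a s * (A.mulVec (j - i)) s) := by
    intro a
    have hterm : ∀ j : Fin d → ZMod n,
        (G (π j - π i) : ℂ) * x j * ch (∑ s, a s * (A.mulVec j) s) *
          ch (-(∑ s, a s * (A.mulVec i) s))
        = c j * ch (∑ s, a s * (A.mulVec (j - i)) s) := by
      intro j
      rw [mul_assoc, ← aux_ch_add hch]
      congr 2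
      rw [Matrix.mulVec_sub]
      simp only [Pi.sub_apply, mul_sub, Finset.sum_sub_distrib]
      ring
    rw [Finset.sum_mul]
    simp_rw [hterm]
    rw [Finset.sum_eq_sum_sdiff_singleton_add (Finset.mem_univ i)]
    have hi : c i * ch (∑ s, a s * (A.mulVec (i - i)) s) = x i * (G 0 : ℂ) := by
      rw [sub_self, Matrix.mulVec_zero]
      simp [hc, aux_ch_zero hch, sub_self, mul_comm]
    rw [hi, add_sub_cancel_right]
  -- norm as complex product
  have hnorm : ∀ z : ℂ, ((‖z‖ ^ 2 : ℝ) : ℂ) = z * (starRingEnd ℂ) z := by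
    intro z
    rw [Complex.mul_conj]
    norm_cast
    rw [Complex.normSq_eq_norm_sq]
  -- main complex identity
  have main : ∑ a : Fin d → ZMod n,
      ((‖∑ j ∈ S, c j * ch (∑ s, a s * (A.mulVec (j - i)) s)‖ ^ 2 : ℝ) : ℂ)
      = (n : ℂ) ^ d * ∑ j ∈ S, ((‖c j‖ ^ 2 : ℝ) : ℂ) := by
    have expand : ∀ a : Fin d → ZMod n,
        ((‖∑ j ∈ S, c j * ch (∑ s, a s * (A.mulVec (j - i)) s)‖ ^ 2 : ℝ) : ℂ)
        = ∑ j ∈ S, ∑ l ∈ S, (c j * (starRingEnd ℂ) (c l)) *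
            ch (∑ s, a s * (A.mulVec (j - l)) s) := by
      intro a
      rw [hnorm]
      rw [map_sum, Finset.sum_mul_sum]
      refine Finset.sum_congr rfl fun j _ => Finset.sum_congr rfl fun l _ => ?_
      rw [map_mul, aux_ch_conj hch]
      have harg : (∑ s, a s * (A.mulVec (j - i)) s) + (-(∑ s, a s * (A.mulVec (l - i)) s))
          = ∑ s, a s * (A.mulVec (j - l)) s := by
        simp only [Matrix.mulVec_sub, Pi.sub_apply, mul_sub, Finset.sum_sub_distrib]
        ring
      calc c j * ch (∑ s, a s * (A.mulVec (j - i)) s) *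
              ((starRingEnd ℂ) (c l) * ch (-(∑ s, a s * (A.mulVec (l - i)) s)))
          = (c j * (starRingEnd ℂ) (c l)) *
              (ch (∑ s, a s * (A.mulVec (j - i)) s) * ch (-(∑ s, a s * (A.mulVec (l - i)) s))) := by
            ring
        _ = (c j * (starRingEnd ℂ) (c l)) * ch (∑ s, a s * (A.mulVec (j - l)) s) := by
            rw [← aux_ch_add hch, harg]
    simp_rw [expand]
    rw [Finset.sum_comm]
    have inner : ∀ j ∈ S, ∑ a : Fin d → ZMod n, ∑ l ∈ S,
        (c j * (starRingEnd ℂ) (c l)) * ch (∑ s, a s * (A.mulVec (j - l)) s)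
        = (c j * (starRingEnd ℂ) (c j)) * (n : ℂ) ^ d := by
      intro j hj
      rw [Finset.sum_comm]
      have hjl : ∀ l : Fin d → ZMod n,
          ∑ a : Fin d → ZMod n, (c j * (starRingEnd ℂ) (c l)) * ch (∑ s, a s * (A.mulVec (j - l)) s)
          = (c j * (starRingEnd ℂ) (c l)) * (if j = l then (n : ℂ) ^ d else 0) := by
        intro l
        rw [← Finset.mul_sum, aux_sum_ch_pi hch]
        congr 1
        have : A.mulVec (j - l) = 0 ↔ j = l := by
          constructor
          · intro h
            have h0 : A.mulVec (j - l) = A.mulVec 0 := by rw [h, Matrix.mulVec_zero]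
            exact sub_eq_zero.mp (hinj h0)
          · intro h; rw [h, sub_self, Matrix.mulVec_zero]
        simp [this]
      simp_rw [hjl]
      simp_rw [mul_ite, mul_zero]
      rw [Finset.sum_ite_eq S j (fun l => c j * (starRingEnd ℂ) (c l) * (n : ℂ) ^ d)]
      rw [if_pos hj]
    rw [Finset.sum_congr rfl inner, Finset.mul_sum]
    refine Finset.sum_congr rfl fun j _ => ?_
    rw [hnorm]
    ring
  -- conclude
  have hfin : ∀ j, ‖x j‖ ^ 2 * (G (π j - π i)) ^ 2 = ‖c j‖ ^ 2 := by
    intro j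
    rw [hc]
    simp only
    rw [norm_mul, mul_pow, Complex.norm_real, Real.norm_eq_abs, _root_.sq_abs]
    ring
  rw [Finset.sum_congr rfl (fun j _ => hfin j)]
  simp_rw [key]
  refine Complex.ofReal_injective ?_
  rw [Complex.ofReal_mul, Complex.ofReal_sum, Complex.ofReal_sum, Complex.ofReal_inv,
    Complex.ofReal_pow, Complex.ofReal_natCast, main, inv_mul_cancel_left₀]
  exact pow_ne_zero _ (Nat.cast_ne_zero.mpr (NeZero.ne n))
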